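/- arXiv:1506.01367 — 2 statements merged into one kernel-verified Lean document; each statement's English description precedes it below -/
import Mathlib

section
/- There is a universal constant C > 0 with the following property. For every ε ∈ (0, 1/2), every real K ≥ 15, and every natural number d with d ≥ 2K·ln(1/ε), the degree-d Maclaurin partial sum T_d of the standard Gaussian pdf, T_d(x) = (1/√(2π))·Σ_{n : 2n ≤ d} (−1)^n x^{2n}/(2^n · n!), satisfies ∫_{−2√(ln(1/ε))}^{2√(ln(1/ε))} |N(x) − T_d(x)| dx ≤ C · ε^K · √(ln(1/ε)). -/
open MeasureTheory

/-- The standard Gaussian probability density function. -/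
noncomputable def stdGauss (x : ℝ) : ℝ :=
  (Real.sqrt (2 * Real.pi))⁻¹ * Real.exp (-x ^ 2 / 2)

/-- The degree-`d` Maclaurin partial sum of the standard Gaussian pdf:
`T_d(x) = (1/√(2π)) · Σ_{n : 2n ≤ d} (−1)^n x^{2n} / (2^n · n!)`. -/
noncomputable def taylorGauss (d : ℕ) (x : ℝ) : ℝ :=
  (Real.sqrt (2 * Real.pi))⁻¹ *
    ∑ n ∈ Finset.range (d / 2 + 1), (-1 : ℝ) ^ n * x ^ (2 * n) / (2 ^ n * n.factorial)

lemma exp_neg_sub_sum_le (m : ℕ) (t : ℝ) (ht : 0 ≤ t) (ht2 : 2 * t ≤ (m : ℝ) + 2) :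
    |Real.exp (-t) - ∑ n ∈ Finset.range (m + 1), (-1 : ℝ) ^ n * t ^ n / n.factorial|
      ≤ 2 * (t ^ (m + 1) / (m + 1).factorial) := by
  have hsum : Summable (fun n : ℕ => (-t) ^ n / (n.factorial : ℝ)) :=
    Real.summable_pow_div_factorial (-t)
  have hexp : Real.exp (-t) = ∑' n : ℕ, (-t) ^ n / (n.factorial : ℝ) := by
    rw [Real.exp_eq_exp_ℝ, NormedSpace.exp_eq_tsum_div]
  have hps : ∑ n ∈ Finset.range (m + 1), (-1 : ℝ) ^ n * t ^ n / n.factorial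
      = ∑ n ∈ Finset.range (m + 1), (-t) ^ n / (n.factorial : ℝ) := by
    refine Finset.sum_congr rfl fun n _ => ?_
    rw [neg_pow]
    ring
  have hshift := Summable.sum_add_tsum_nat_add (m + 1) hsum
  have hdiff : Real.exp (-t) - ∑ n ∈ Finset.range (m + 1), (-1 : ℝ) ^ n * t ^ n / n.factorial
      = ∑' k : ℕ, (-t) ^ (k + (m + 1)) / ((k + (m + 1)).factorial : ℝ) := by
    rw [hps, hexp, ← hshift]; ring
  rw [hdiff]
  -- geometric bound
  have hN1 : (0 : ℝ) < ((m + 1).factorial : ℝ) := by positivity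
  have hg : HasSum (fun k : ℕ => (t ^ (m + 1) / ((m + 1).factorial : ℝ)) * (1 / 2) ^ k)
      ((t ^ (m + 1) / ((m + 1).factorial : ℝ)) * 2) := by
    have h := (hasSum_geometric_of_lt_one (by norm_num : (0:ℝ) ≤ 1/2)
      (by norm_num : (1:ℝ)/2 < 1)).mul_left (t ^ (m + 1) / ((m + 1).factorial : ℝ))
    have h2 : ((1:ℝ) - 1/2)⁻¹ = 2 := by norm_num
    rwa [h2] at h
  have hbound : ∀ k : ℕ, ‖(-t) ^ (k + (m + 1)) / ((k + (m + 1)).factorial : ℝ)‖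
      ≤ (t ^ (m + 1) / ((m + 1).factorial : ℝ)) * (1 / 2) ^ k := by
    intro k
    have habs : ‖(-t) ^ (k + (m + 1)) / ((k + (m + 1)).factorial : ℝ)‖
        = t ^ (k + (m + 1)) / ((k + (m + 1)).factorial : ℝ) := by
      rw [Real.norm_eq_abs, abs_div, abs_pow, abs_neg, abs_of_nonneg ht,
        abs_of_pos (by positivity : (0:ℝ) < ((k + (m + 1)).factorial : ℝ))]
    rw [habs]
    have hfac : ((m + 1).factorial : ℝ) * ((m : ℝ) + 2) ^ k ≤ ((k + (m + 1)).factorial : ℝ) := by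
      have := Nat.factorial_mul_pow_le_factorial (m := m + 1) (n := k)
      have h2 : (m + 1) + k = k + (m + 1) := by ring
      rw [h2] at this
      calc ((m + 1).factorial : ℝ) * ((m : ℝ) + 2) ^ k
          = (((m + 1).factorial * (m + 1 + 1) ^ k : ℕ) : ℝ) := by push_cast; ring
        _ ≤ _ := by exact_mod_cast Nat.cast_le.mpr this
    have hpos1 : (0:ℝ) < ((m + 1).factorial : ℝ) * ((m : ℝ) + 2) ^ k := by positivity
    have h1 : t ^ (k + (m + 1)) / ((k + (m + 1)).factorial : ℝ)
        ≤ t ^ (k + (m + 1)) / (((m + 1).factorial : ℝ) * ((m : ℝ) + 2) ^ k) := by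
      apply div_le_div_of_nonneg_left (by positivity) hpos1 hfac
    refine h1.trans ?_
    have heq : t ^ (k + (m + 1)) / (((m + 1).factorial : ℝ) * ((m : ℝ) + 2) ^ k)
        = (t ^ (m + 1) / ((m + 1).factorial : ℝ)) * (t / ((m : ℝ) + 2)) ^ k := by
      rw [pow_add, div_pow]
      field_simp
    rw [heq]
    apply mul_le_mul_of_nonneg_left _ (by positivity)
    apply pow_le_pow_left₀ (by positivity)
    rw [div_le_div_iff₀ (by positivity) (by norm_num)]
    linarith
  have := tsum_of_norm_bounded hg hbound
  calc |∑' k : ℕ, (-t) ^ (k + (m + 1)) / ((k + (m + 1)).factorial : ℝ)|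
      ≤ (t ^ (m + 1) / ((m + 1).factorial : ℝ)) * 2 := this
    _ = 2 * (t ^ (m + 1) / ((m + 1).factorial : ℝ)) := by ring

lemma pow_div_factorial_le (N : ℕ) (y L K : ℝ) (hL : 0 < L) (hK : 15 ≤ K)
    (hN : K * L ≤ (N : ℝ)) (hy : 0 ≤ y) (hyL : y ≤ 2 * L) :
    y ^ N / (N.factorial : ℝ) ≤ Real.exp (-(K * L)) := by
  have hNpos : (0 : ℝ) < N := lt_of_lt_of_le (by positivity) hN
  have he : (0:ℝ) < Real.exp 1 := Real.exp_pos 1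
  have he9 : Real.exp 1 < 2.7182818286 := Real.exp_one_lt_d9
  -- N^N ≤ exp(N) * N!
  have hfac : (N : ℝ) ^ N ≤ Real.exp 1 ^ N * (N.factorial : ℝ) := by
    have h1 : (N : ℝ) ^ N / (N.factorial : ℝ) ≤ Real.exp N :=
      Real.pow_div_factorial_le_exp (x := (N:ℝ)) (Nat.cast_nonneg N) N
    have h2 : Real.exp (N : ℝ) = Real.exp 1 ^ N := by
      rw [← Real.exp_nat_mul]; norm_num
    have hfp : (0:ℝ) < (N.factorial : ℝ) := by positivity
    rw [div_le_iff₀ hfp] at h1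
    rw [← h2]; linarith
  have hfp : (0:ℝ) < (N.factorial : ℝ) := by positivity
  have step1 : y ^ N / (N.factorial : ℝ) ≤ (2 * L) ^ N / (N.factorial : ℝ) := by
    exact div_le_div₀ (by positivity) (pow_le_pow_left₀ hy hyL N) hfp le_rfl
  have step2 : (2 * L) ^ N / (N.factorial : ℝ) ≤ (2 * Real.exp 1 * L / N) ^ N := by
    rw [div_le_iff₀ hfp, div_pow, div_mul_eq_mul_div, le_div_iff₀ (by positivity)]
    calc (2 * L) ^ N * ((N:ℝ) ^ N)
        ≤ (2 * L) ^ N * (Real.exp 1 ^ N * (N.factorial : ℝ)) := by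
          apply mul_le_mul_of_nonneg_left hfac (by positivity)
      _ = (2 * Real.exp 1 * L) ^ N * (N.factorial : ℝ) := by
          rw [mul_pow, mul_pow]; ring
  have hbase : 2 * Real.exp 1 * L / N ≤ (Real.exp 1)⁻¹ := by
    have h1 : 2 * Real.exp 1 * L / N ≤ 2 * Real.exp 1 * L / (K * L) := by
      apply div_le_div_of_nonneg_left (by positivity) (by positivity) hN
    have h2 : 2 * Real.exp 1 * L / (K * L) = 2 * Real.exp 1 / K := by
      field_simp
    rw [h2] at h1
    refine h1.trans ?_
    rw [div_le_iff₀ (by positivity : (0:ℝ) < K), inv_mul_eq_div, le_div_iff₀ he]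
    nlinarith
  have step3 : (2 * Real.exp 1 * L / N) ^ N ≤ ((Real.exp 1)⁻¹) ^ N :=
    pow_le_pow_left₀ (by positivity) hbase N
  have step4 : ((Real.exp 1)⁻¹) ^ N = Real.exp (-(N : ℝ)) := by
    rw [← Real.exp_neg, ← Real.exp_nat_mul]
    norm_num
  have step5 : Real.exp (-(N : ℝ)) ≤ Real.exp (-(K * L)) := by
    apply Real.exp_le_exp.mpr
    linarith
  calc y ^ N / (N.factorial : ℝ) ≤ (2 * L) ^ N / (N.factorial : ℝ) := step1
    _ ≤ (2 * Real.exp 1 * L / N) ^ N := step2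
    _ ≤ ((Real.exp 1)⁻¹) ^ N := step3
    _ = Real.exp (-(N : ℝ)) := step4
    _ ≤ Real.exp (-(K * L)) := step5

theorem stmt0 :
    ∃ C : ℝ, 0 < C ∧
      ∀ (ε K : ℝ) (d : ℕ), 0 < ε → ε < 1 / 2 → 15 ≤ K →
        2 * K * Real.log (1 / ε) ≤ (d : ℝ) →
        (∫ x in (-(2 * Real.sqrt (Real.log (1 / ε))))..(2 * Real.sqrt (Real.log (1 / ε))),
            |stdGauss x - taylorGauss d x|) ≤ C * ε ^ K * Real.sqrt (Real.log (1 / ε)) := by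
  refine ⟨8, by norm_num, ?_⟩
  intro ε K d hε hε2 hK hd
  set L := Real.log (1 / ε) with hLdef
  have hL : 0 < L := Real.log_pos (by rw [one_div]; exact (one_lt_inv₀ hε).mpr (by linarith))
  have hKpos : (0:ℝ) < K := by linarith
  set m := d / 2 with hmdef
  have hdm : (d : ℝ) ≤ 2 * m + 1 := by
    have h1 : 2 * m + d % 2 = d := Nat.div_add_mod' d 2 ▸ by omega
    have h2 : d % 2 ≤ 1 := by omega
    have : d ≤ 2 * m + 1 := by omega
    exact_mod_cast this
  have hKL : K * L ≤ (m : ℝ) + 1 := by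
    have : 2 * (K * L) ≤ 2 * m + 1 := by
      calc 2 * (K * L) = 2 * K * L := by ring
        _ ≤ (d : ℝ) := hd
        _ ≤ 2 * m + 1 := hdm
    linarith
  set a := 2 * Real.sqrt L with hadef
  have ha : 0 ≤ a := by positivity
  have hεK : ε ^ K = Real.exp (-(K * L)) := by
    rw [Real.rpow_def_of_pos hε]
    congr 1
    rw [hLdef, one_div, Real.log_inv]
    ring
  have hεKpos : 0 < ε ^ K := Real.rpow_pos_of_pos hε K
  -- pointwise bound
  have hpt : ∀ x ∈ Set.uIoc (-a) a,
      ‖|stdGauss x - taylorGauss d x|‖ ≤ (Real.sqrt (2 * Real.pi))⁻¹ * (2 * ε ^ K) := by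
    intro x hx
    have hxa : |x| ≤ a := by
      rw [Set.uIoc_of_le (by linarith : -a ≤ a)] at hx
      exact abs_le.mpr ⟨le_of_lt hx.1, hx.2⟩
    have hx2 : x ^ 2 ≤ 4 * L := by
      have : x ^ 2 = |x| ^ 2 := (sq_abs x).symm
      rw [this]
      calc |x| ^ 2 ≤ a ^ 2 := pow_le_pow_left₀ (abs_nonneg x) hxa 2
        _ = 4 * L := by
          rw [hadef, mul_pow, Real.sq_sqrt hL.le]; norm_num
    set t := x ^ 2 / 2 with htdef
    have ht : 0 ≤ t := by positivity
    have ht2L : t ≤ 2 * L := by rw [htdef]; linarith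
    have hm2 : 2 * t ≤ (m : ℝ) + 2 := by
      have h15 : 15 * L ≤ K * L := by nlinarith
      have : 4 * L ≤ (m : ℝ) + 1 := by nlinarith
      rw [htdef]; linarith
    have hdiff : stdGauss x - taylorGauss d x
        = (Real.sqrt (2 * Real.pi))⁻¹ *
          (Real.exp (-t) - ∑ n ∈ Finset.range (m + 1), (-1 : ℝ) ^ n * t ^ n / n.factorial) := by
      rw [stdGauss, taylorGauss, mul_sub]
      congr 2
      · congr 1; rw [htdef]; ring
      · refine Finset.sum_congr rfl fun n _ => ?_
        rw [htdef, div_pow, pow_mul]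
        ring
    have hsq : (0:ℝ) < Real.sqrt (2 * Real.pi) :=
      Real.sqrt_pos.mpr (by positivity)
    have hb1 := exp_neg_sub_sum_le m t ht hm2
    have hb2 : t ^ (m + 1) / ((m + 1).factorial : ℝ) ≤ ε ^ K := by
      rw [hεK]
      exact pow_div_factorial_le (m + 1) t L K hL hK (by push_cast; linarith) ht ht2L
    rw [hdiff, Real.norm_eq_abs, abs_abs, abs_mul, abs_of_pos (inv_pos.mpr hsq)]
    apply mul_le_mul_of_nonneg_left _ (by positivity)
    linarith
  have hint := intervalIntegral.norm_integral_le_of_norm_le_const hpt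
  have habs : |a - (-a)| = 2 * a := by
    rw [abs_of_nonneg (by linarith)]; ring
  rw [habs] at hint
  have hfin : (∫ x in (-a)..a, |stdGauss x - taylorGauss d x|)
      ≤ (Real.sqrt (2 * Real.pi))⁻¹ * (2 * ε ^ K) * (2 * a) :=
    (le_abs_self _).trans hint
  refine hfin.trans ?_
  have hsq1 : 1 ≤ Real.sqrt (2 * Real.pi) := by
    rw [show (1:ℝ) = Real.sqrt 1 by simp]
    exact Real.sqrt_le_sqrt (by nlinarith [Real.pi_gt_three])
  have hinv : (Real.sqrt (2 * Real.pi))⁻¹ ≤ 1 := by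
    rw [inv_le_one_iff₀]  -- may not exist; fallback below
    right
    exact hsq1
  calc (Real.sqrt (2 * Real.pi))⁻¹ * (2 * ε ^ K) * (2 * a)
      ≤ 1 * (2 * ε ^ K) * (2 * a) := by
        apply mul_le_mul_of_nonneg_right _ (by positivity)
        apply mul_le_mul_of_nonneg_right hinv (by positivity)
    _ = 8 * ε ^ K * Real.sqrt L := by rw [hadef]; ring
end

section
/- Let m ≥ 0 be an integer, β > 0, and let p be a polynomial of degree at most m with real coefficients such that p(x) ≥ 0 for all x ∈ [−1, 1] and ∫_{−1}^{1} p(x) dx ≤ β. Then for every x ∈ [−1, 1], p(x) ≤ β·(m+1)³·(√2 + 1)^m. -/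
/-!
Expand `p` in Chebyshev polynomials. Orthogonality for the weight `(1 - x²)^(-1/2)` and
`|T_k| ≤ 1` bound every coefficient by `(2/π) ∫₀^π p(cos θ) dθ`, hence
`max p ≤ (2(m+1)/π) ∫₀^π p(cos θ) dθ`. On the other hand `∫₀^π p(cos θ) sin θ dθ = ∫₋₁¹ p`, and
`sin θ ≥ sin δ` away from the endpoints, while near them `p(cos θ) ≤ max p`. With
`δ = π / (8(m+1))` the endpoint contribution is `max p / 2` and can be absorbed, which together
with `sin δ ≥ 8δ/9` leaves `max p ≤ 36 (m+1)² / π² · ∫₋₁¹ p`.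
-/

open MeasureTheory Polynomial Real Set

namespace Polynomial.Chebyshev

theorem exists_eq_sum_smul_T {p : ℝ[X]} {m : ℕ} (hp : p.natDegree ≤ m) :
    ∃ c : ℕ → ℝ, p = ∑ j ∈ Finset.range (m + 1), c j • T ℝ j := by
  have hmem : p ∈ degreeLT ℝ (m + 1) := by
    rw [mem_degreeLT]
    exact (degree_le_of_natDegree_le hp).trans_lt (by exact_mod_cast Nat.lt_succ_self m)
  rw [← Sequence.span_degreeLT (chebyshevTsequence ℝ) (by simp),
    show Set.Iio (m + 1) = Finset.range (m + 1) by simp,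
    Submodule.mem_span_image_finset_iff_exists_fun'] at hmem
  obtain ⟨c, hc⟩ := hmem
  exact ⟨c, hc.symm⟩

theorem ae_measureT_mem_Icc : ∀ᵐ x ∂measureT, x ∈ Icc (-1 : ℝ) 1 :=
  (ae_restrict_mem measurableSet_Ioc).mono fun _ hx => Ioc_subset_Icc_self hx

theorem pi_div_two_le_integral_eval_T_real_mul_self_measureT (k : ℕ) :
    π / 2 ≤ ∫ x, (T ℝ k).eval x * (T ℝ k).eval x ∂measureT := by
  rcases eq_or_ne k 0 with rfl | hk
  · rw [Nat.cast_zero, integral_eval_T_real_mul_self_measureT_zero]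
    linarith [pi_pos]
  · rw [integral_T_real_mul_self_measureT_of_ne_zero hk]

theorem abs_integral_mul_eval_T_real_measureT_le {f : ℝ → ℝ} (hf : ContinuousOn f (Icc (-1) 1))
    (hf₀ : ∀ x ∈ Icc (-1 : ℝ) 1, 0 ≤ f x) (k : ℤ) :
    |∫ x, f x * (T ℝ k).eval x ∂measureT| ≤ ∫ x, f x ∂measureT := by
  refine abs_integral_le_integral_abs.trans (integral_mono_ae ?_ (integrable_measureT hf) ?_)
  · exact (integrable_measureT (hf.mul (by fun_prop))).abs
  · filter_upwards [ae_measureT_mem_Icc] with x hx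
    rw [abs_mul, abs_of_nonneg (hf₀ x hx)]
    exact mul_le_of_le_one_right (hf₀ x hx) (abs_eval_T_real_le_one k (abs_le.2 hx))

theorem abs_coeff_le_integral_measureT {p : ℝ[X]} {m : ℕ} {c : ℕ → ℝ}
    (hc : p = ∑ j ∈ Finset.range (m + 1), c j • T ℝ j)
    (hp : ∀ x ∈ Icc (-1 : ℝ) 1, 0 ≤ p.eval x) {k : ℕ} (hk : k ≤ m) :
    |c k| ≤ 2 / π * ∫ x, p.eval x ∂measureT := by
  have hcoeff : ∫ x, p.eval x * (T ℝ k).eval x ∂measureT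
      = c k * ∫ x, (T ℝ k).eval x * (T ℝ k).eval x ∂measureT := by
    simp_rw [hc, eval_finsetSum, eval_smul, smul_eq_mul, Finset.sum_mul, mul_assoc]
    rw [integral_finsetSum _ fun j _ => (integrable_measureT (by fun_prop)).const_mul (c j)]
    simp_rw [integral_const_mul]
    refine Finset.sum_eq_single_of_mem k (Finset.mem_range.2 (by omega)) fun j _ hj => ?_
    rw [integral_eval_T_real_mul_eval_T_real_measureT_of_ne hj, mul_zero]
  have hnorm := pi_div_two_le_integral_eval_T_real_mul_self_measureT k
  have hbound := abs_integral_mul_eval_T_real_measureT_le p.continuous.continuousOn hp k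
  rw [hcoeff, abs_mul, abs_of_nonneg (pi_div_two_pos.le.trans hnorm)] at hbound
  rw [div_mul_eq_mul_div, le_div_iff₀ pi_pos]
  nlinarith [mul_le_mul_of_nonneg_left hnorm (abs_nonneg (c k))]

theorem eval_le_integral_measureT {p : ℝ[X]} {m : ℕ} (hdeg : p.natDegree ≤ m)
    (hp : ∀ x ∈ Icc (-1 : ℝ) 1, 0 ≤ p.eval x) {x : ℝ} (hx : x ∈ Icc (-1 : ℝ) 1) :
    p.eval x ≤ 2 * (m + 1) / π * ∫ y, p.eval y ∂measureT := by
  obtain ⟨c, hc⟩ := exists_eq_sum_smul_T hdeg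
  calc p.eval x = ∑ j ∈ Finset.range (m + 1), c j * (T ℝ j).eval x := by
        simp [hc, eval_finsetSum]
    _ ≤ ∑ j ∈ Finset.range (m + 1), 2 / π * ∫ y, p.eval y ∂measureT := by
        refine Finset.sum_le_sum fun j hj => ?_
        calc c j * (T ℝ j).eval x ≤ |c j| * |(T ℝ j).eval x| :=
              (le_abs_self _).trans (abs_mul _ _).le
          _ ≤ |c j| :=
              mul_le_of_le_one_right (abs_nonneg _) (abs_eval_T_real_le_one j (abs_le.2 hx))
          _ ≤ _ := abs_coeff_le_integral_measureT hc hp (Nat.lt_succ_iff.1 (Finset.mem_range.1 hj))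
    _ = 2 * (m + 1) / π * ∫ y, p.eval y ∂measureT := by
        rw [Finset.sum_const, Finset.card_range, nsmul_eq_mul]
        push_cast
        ring

end Polynomial.Chebyshev

theorem Real.sin_le_sin_of_mem_Icc {δ θ : ℝ} (hδ : -(π / 2) ≤ δ) (hθ : θ ∈ Icc δ (π - δ)) :
    sin δ ≤ sin θ := by
  rcases le_total θ (π / 2) with h | h
  · exact sin_le_sin_of_le_of_le_pi_div_two (by linarith [hθ.1, hθ.2]) h hθ.1
  · rw [← sin_pi_sub θ]
    exact sin_le_sin_of_le_of_le_pi_div_two (by linarith [hθ.1, hθ.2]) (by linarith)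
      (by linarith [hθ.2])

theorem Real.eight_ninths_mul_le_sin {x : ℝ} (hx : 0 < x) (hx' : x ≤ 4 / 5) :
    8 / 9 * x ≤ sin x := by
  have hsq : x ^ 2 ≤ 2 / 3 := by nlinarith
  have hcube : x ^ 3 ≤ 2 / 3 * x := by nlinarith
  linarith [sin_gt_sub_cube hx]

theorem integral_comp_cos_mul_sin {f : ℝ → ℝ} (hf : ContinuousOn f (Icc (-1) 1)) :
    ∫ θ in 0..π, f (cos θ) * sin θ = ∫ x in -1..1, f x := by
  have := intervalIntegral.integral_comp_mul_deriv' (a := 0) (b := π) (f := cos)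
    (f' := fun θ => -sin θ) (g := f) (fun θ _ => hasDerivAt_cos θ) (by fun_prop)
    (hf.mono (by rintro _ ⟨θ, -, rfl⟩; exact cos_mem_Icc θ))
  simp only [Function.comp_apply, mul_neg, intervalIntegral.integral_neg, cos_zero, cos_pi] at this
  rwa [intervalIntegral.integral_symm (-1) 1, neg_inj] at this

section CosSubstitution

variable {f : ℝ → ℝ} (hf : ContinuousOn f (Icc (-1) 1)) (hf₀ : ∀ x ∈ Icc (-1 : ℝ) 1, 0 ≤ f x)
include hf hf₀

theorem integral_comp_cos_le_div_sin {δ : ℝ} (hδ : 0 < δ) (hδπ : δ ≤ π / 2) :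
    ∫ θ in δ..π - δ, f (cos θ) ≤ (∫ x in -1..1, f x) / sin δ := by
  have hg : Continuous fun θ => f (cos θ) := hf.comp_continuous continuous_cos cos_mem_Icc
  have hsin : 0 < sin δ := sin_pos_of_pos_of_lt_pi hδ (by linarith [pi_pos])
  rw [← integral_comp_cos_mul_sin hf]
  calc ∫ θ in δ..π - δ, f (cos θ)
      ≤ ∫ θ in δ..π - δ, f (cos θ) * sin θ / sin δ := by
        refine intervalIntegral.integral_mono_on (by linarith) (hg.intervalIntegrable _ _)
          (((hg.mul continuous_sin).div_const _).intervalIntegrable _ _) fun θ hθ => ?_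
        rw [le_div_iff₀ hsin]
        exact mul_le_mul_of_nonneg_left (sin_le_sin_of_mem_Icc (by linarith) hθ)
          (hf₀ _ (cos_mem_Icc θ))
    _ = (∫ θ in δ..π - δ, f (cos θ) * sin θ) / sin δ := intervalIntegral.integral_div _ _
    _ ≤ (∫ θ in 0..π, f (cos θ) * sin θ) / sin δ := by
        refine div_le_div_of_nonneg_right (intervalIntegral.integral_mono_interval hδ.le
          (by linarith) (by linarith) ?_ ((hg.mul continuous_sin).intervalIntegrable _ _)) hsin.le
        exact (ae_restrict_mem measurableSet_Ioc).mono fun θ hθ =>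
          mul_nonneg (hf₀ _ (cos_mem_Icc θ)) (sin_nonneg_of_nonneg_of_le_pi hθ.1.le hθ.2)

theorem integral_comp_cos_le {M δ : ℝ} (hfM : ∀ x ∈ Icc (-1 : ℝ) 1, f x ≤ M)
    (hδ : 0 < δ) (hδπ : δ ≤ π / 2) :
    ∫ θ in 0..π, f (cos θ) ≤ 2 * δ * M + (∫ x in -1..1, f x) / sin δ := by
  have hg : Continuous fun θ => f (cos θ) := hf.comp_continuous continuous_cos cos_mem_Icc
  have hend : ∀ a b, a ≤ b → ∫ θ in a..b, f (cos θ) ≤ (b - a) * M := fun a b hab => by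
    simpa [mul_comm] using intervalIntegral.integral_mono_on hab (hg.intervalIntegrable a b)
      (continuous_const.intervalIntegrable (μ := volume) a b) fun θ _ => hfM _ (cos_mem_Icc θ)
  rw [← intervalIntegral.integral_add_adjacent_intervals (hg.intervalIntegrable 0 (π - δ))
      (hg.intervalIntegrable (π - δ) π),
    ← intervalIntegral.integral_add_adjacent_intervals (hg.intervalIntegrable 0 δ)
      (hg.intervalIntegrable δ (π - δ))]
  linarith [hend 0 δ hδ.le, hend (π - δ) π (by linarith),
    integral_comp_cos_le_div_sin hf hf₀ hδ hδπ]

end CosSubstitution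

namespace Polynomial

variable {p : ℝ[X]} {m : ℕ} (hdeg : p.natDegree ≤ m) (hp : ∀ x ∈ Icc (-1 : ℝ) 1, 0 ≤ p.eval x)
include hdeg hp

theorem eval_le_of_forall_eval_le {M δ : ℝ} (hpM : ∀ y ∈ Icc (-1 : ℝ) 1, p.eval y ≤ M)
    (hδ : 0 < δ) (hδπ : δ ≤ π / 2) {x : ℝ} (hx : x ∈ Icc (-1 : ℝ) 1) :
    p.eval x ≤ 2 * (m + 1) / π * (2 * δ * M + (∫ y in -1..1, p.eval y) / sin δ) :=
  calc p.eval x ≤ 2 * (m + 1) / π * ∫ y, p.eval y ∂Chebyshev.measureT :=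
        Chebyshev.eval_le_integral_measureT hdeg hp hx
    _ = 2 * (m + 1) / π * ∫ θ in 0..π, p.eval (cos θ) := by
        rw [Chebyshev.integral_measureT_eq_integral_cos]
    _ ≤ _ := by
        gcongr
        exact integral_comp_cos_le p.continuous.continuousOn hp hpM hδ hδπ

theorem eval_le_mul_integral_of_nonneg_on_Icc {x : ℝ} (hx : x ∈ Icc (-1 : ℝ) 1) :
    p.eval x ≤ 36 * (m + 1) ^ 2 / π ^ 2 * ∫ y in -1..1, p.eval y := by
  obtain ⟨x₀, hx₀, hmax⟩ := isCompact_Icc.exists_isMaxOn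
    (nonempty_Icc.2 (by norm_num : (-1 : ℝ) ≤ 1)) p.continuous.continuousOn
  set M := p.eval x₀
  set J := ∫ y in -1..1, p.eval y
  set δ := π / (8 * (m + 1)) with hδdef
  have hA : 0 < 2 * (m + 1) / π := by positivity
  have hδ : 0 < δ := by positivity
  have hδπ : δ ≤ π / 8 :=
    div_le_div_of_nonneg_left pi_pos.le (by norm_num) (by linarith [m.cast_nonneg (α := ℝ)])
  have hhalf : 2 * (m + 1) / π * (2 * δ) = 1 / 2 := by
    rw [hδdef]
    field_simp
    ring
  have hJsin : J / sin δ ≤ J / (8 / 9 * δ) :=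
    div_le_div_of_nonneg_left (intervalIntegral.integral_nonneg (by norm_num) hp) (by positivity)
      (eight_ninths_mul_le_sin hδ (by linarith [pi_le_four]))
  have hM : M ≤ M / 2 + 2 * (m + 1) / π * (J / sin δ) :=
    calc M ≤ 2 * (m + 1) / π * (2 * δ * M + J / sin δ) :=
          eval_le_of_forall_eval_le hdeg hp (fun y hy => hmax hy) hδ (by linarith [pi_pos]) hx₀
      _ = 2 * (m + 1) / π * (2 * δ) * M + 2 * (m + 1) / π * (J / sin δ) := by ring
      _ = M / 2 + 2 * (m + 1) / π * (J / sin δ) := by rw [hhalf]; ring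
  calc p.eval x ≤ M := hmax hx
    _ ≤ 2 * (2 * (m + 1) / π * (J / (8 / 9 * δ))) := by
        linarith [mul_le_mul_of_nonneg_left hJsin hA.le]
    _ = 36 * (m + 1) ^ 2 / π ^ 2 * J := by
        rw [hδdef]
        field_simp
        ring

end Polynomial

theorem four_le_mul_sqrt_two_add_one_pow {m : ℕ} (hm : 0 < m) :
    4 ≤ ((m : ℝ) + 1) * (√2 + 1) ^ m := by
  have h1 : (1 : ℝ) ≤ m := by exact_mod_cast hm
  have h2 : 2 ≤ (√2 + 1) ^ m :=
    (by linarith [one_lt_sqrt_two] : (2 : ℝ) ≤ √2 + 1).trans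
      (le_self_pow₀ (by linarith [one_lt_sqrt_two]) hm.ne')
  nlinarith

theorem stmt13_general (m : ℕ) (β : ℝ) (p : Polynomial ℝ) (hdeg : p.natDegree ≤ m)
    (hnonneg : ∀ x ∈ Set.Icc (-1 : ℝ) 1, 0 ≤ p.eval x)
    (hint : (∫ x in (-1 : ℝ)..1, p.eval x) ≤ β) :
    ∀ x ∈ Set.Icc (-1 : ℝ) 1, p.eval x ≤ β * ((m : ℝ) + 1) ^ 3 * (Real.sqrt 2 + 1) ^ m := by
  intro x hx
  have hJ : 0 ≤ ∫ y in (-1 : ℝ)..1, p.eval y :=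
    intervalIntegral.integral_nonneg (by norm_num) hnonneg
  rcases m.eq_zero_or_pos with rfl | hm
  -- `36 / π² > 1`, so constants need the direct argument `∫₋₁¹ c = 2c`
  · rw [eq_C_of_natDegree_le_zero hdeg] at hint hJ ⊢
    simp only [eval_C, intervalIntegral.integral_const, smul_eq_mul] at hint hJ ⊢
    norm_num at hint hJ ⊢
    linarith
  have hβ : 0 ≤ β := hJ.trans hint
  have hπ : 9 ≤ π ^ 2 := by nlinarith [pi_gt_three]
  calc p.eval x ≤ 36 * (m + 1) ^ 2 / π ^ 2 * ∫ y in -1..1, p.eval y :=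
        eval_le_mul_integral_of_nonneg_on_Icc hdeg hnonneg hx
    _ ≤ 4 * (m + 1) ^ 2 * β := by
        refine mul_le_mul ?_ hint hJ (by positivity)
        rw [div_le_iff₀ (by positivity)]
        nlinarith
    _ ≤ β * ((m : ℝ) + 1) ^ 3 * (Real.sqrt 2 + 1) ^ m := by
        nlinarith [mul_le_mul_of_nonneg_left (four_le_mul_sqrt_two_add_one_pow hm)
          (by positivity : 0 ≤ β * ((m : ℝ) + 1) ^ 2)]

theorem stmt13 (m : ℕ) (β : ℝ) (hβ : 0 < β) (p : Polynomial ℝ) (hdeg : p.natDegree ≤ m)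
    (hnonneg : ∀ x ∈ Set.Icc (-1 : ℝ) 1, 0 ≤ p.eval x)
    (hint : (∫ x in (-1 : ℝ)..1, p.eval x) ≤ β) :
    ∀ x ∈ Set.Icc (-1 : ℝ) 1, p.eval x ≤ β * ((m : ℝ) + 1) ^ 3 * (Real.sqrt 2 + 1) ^ m :=
  stmt13_general m β p hdeg hnonneg hint
end
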